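/- Let α: ℤ² → GL₂(ℤ) be a group homomorphism. Then α is not injective; equivalently, GL₂(ℤ) contains no subgroup isomorphic to ℤ². -/

import Mathlib

open Matrix

def Nonscalar {R : Type*} [CommRing R] (A : Matrix (Fin 2) (Fin 2) R) : Prop :=
  ¬ (A 0 1 = 0 ∧ A 1 0 = 0 ∧ A 0 0 = A 1 1)

lemma CH2 {R : Type*} [CommRing R] (A : Matrix (Fin 2) (Fin 2) R) :
    A * A = A.trace • A - A.det • 1 := by
  ext i j
  fin_cases i <;> fin_cases j <;>
    simp [Matrix.mul_apply, Fin.sum_univ_two, Matrix.trace_fin_two, Matrix.det_fin_two,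
      Matrix.one_apply] <;> ring

lemma det_comb {R : Type*} [CommRing R] (A : Matrix (Fin 2) (Fin 2) R) (u v : R) :
    (u • (1 : Matrix (Fin 2) (Fin 2) R) + v • A).det
      = u^2 + u*v*A.trace + v^2*A.det := by
  simp [Matrix.det_fin_two, Matrix.trace_fin_two, Matrix.one_apply]
  ring

-- centralizer lemma
lemma centralizer {K : Type*} [Field K] {A B : Matrix (Fin 2) (Fin 2) K}
    (hA : Nonscalar A) (h : A * B = B * A) :
    ∃ u v : K, B = u • 1 + v • A := by
  set a := A 0 0 with ha; set b := A 0 1 with hb; set c := A 1 0 with hc; set e := A 1 1 with he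
  set p := B 0 0 with hp; set q := B 0 1 with hq; set r := B 1 0 with hr; set s := B 1 1 with hs
  have h11 : b * r = q * c := by
    have := congrFun (congrFun h 0) 0
    simp [Matrix.mul_apply, Fin.sum_univ_two] at this
    linear_combination this
  have h12 : a * q + b * s = p * b + q * e := by
    have := congrFun (congrFun h 0) 1
    simpa [Matrix.mul_apply, Fin.sum_univ_two] using this
  have h21 : c * p + e * r = r * a + s * c := by
    have := congrFun (congrFun h 1) 0
    simpa [Matrix.mul_apply, Fin.sum_univ_two] using this
  have ext2 : ∀ u v : K, p = u + v * a → q = v * b → r = v * c → s = u + v * e →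
      B = u • 1 + v • A := by
    intro u v h1 h2 h3 h4
    ext i j
    fin_cases i <;> fin_cases j <;>
      simp [Matrix.one_apply, ← ha, ← hb, ← hc, ← he, ← hp, ← hq, ← hr, ← hs] <;>
      [exact h1; exact h2; exact h3; exact h4]
  by_cases hb0 : b ≠ 0
  · refine ⟨p - (q/b) * a, q/b, ext2 _ _ (by ring) (by field_simp) ?_ ?_⟩
    · field_simp
      linear_combination h11
    · field_simp
      linear_combination h12
  · push_neg at hb0
    by_cases hc0 : c ≠ 0
    · refine ⟨p - (r/c) * a, r/c, ext2 _ _ (by ring) ?_ (by field_simp) ?_⟩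
      · field_simp
        linear_combination -h11
      · field_simp
        linear_combination -h21
    · push_neg at hc0
      have hae : a - e ≠ 0 := by
        intro hae
        exact hA ⟨hb0, hc0, sub_eq_zero.mp hae⟩
      have hq0 : q = 0 := by
        have : q * (a - e) = 0 := by linear_combination h12 + (p-s)*hb0
        rcases mul_eq_zero.mp this with h' | h'
        · exact h'
        · exact absurd h' hae
      have hr0 : r = 0 := by
        have : r * (a - e) = 0 := by linear_combination -h21 + (p-s)*hc0
        rcases mul_eq_zero.mp this with h' | h'
        · exact h'
        · exact absurd h' hae
      refine ⟨p - ((p-s)/(a-e)) * a, (p-s)/(a-e), ext2 _ _ (by ring) ?_ ?_ ?_⟩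
      · rw [hq0, hb0]; ring
      · rw [hr0, hc0]; ring
      · field_simp
        ring

-- uniqueness of representation
lemma rep_unique {K : Type*} [Field K] {A : Matrix (Fin 2) (Fin 2) K}
    (hA : Nonscalar A) {u v u' v' : K}
    (h : u • (1 : Matrix (Fin 2) (Fin 2) K) + v • A = u' • 1 + v' • A) :
    u = u' ∧ v = v' := by
  have h01 := congrFun (congrFun h 0) 1
  have h10 := congrFun (congrFun h 1) 0
  have h00 := congrFun (congrFun h 0) 0
  have h11 := congrFun (congrFun h 1) 1
  simp [Matrix.one_apply] at h01 h10 h00 h11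
  have hv : v = v' := by
    by_contra hvv
    refine hA ⟨?_, ?_, ?_⟩
    · exact h01.resolve_left hvv
    · exact h10.resolve_left hvv
    · have : (v - v') * (A 0 0 - A 1 1) = 0 := by linear_combination h00 - h11
      exact sub_eq_zero.mp ((mul_eq_zero.mp this).resolve_left (sub_ne_zero.mpr hvv))
  refine ⟨?_, hv⟩
  subst hv
  linear_combination h00

-- product of representations
lemma rep_mul {K : Type*} [Field K] {A : Matrix (Fin 2) (Fin 2) K} {t d : K}
    (hCH : A * A = t • A - d • 1) (u v u' v' : K) :
    (u • (1 : Matrix (Fin 2) (Fin 2) K) + v • A) * (u' • 1 + v' • A)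
      = (u*u' - d*(v*v')) • 1 + (u*v' + u'*v + t*(v*v')) • A := by
  have e1 : (u • (1 : Matrix (Fin 2) (Fin 2) K)) * (u' • (1 : Matrix (Fin 2) (Fin 2) K))
      = (u*u') • (1 : Matrix (Fin 2) (Fin 2) K) := by
    rw [smul_mul_assoc, mul_smul_comm, smul_smul, mul_one]
  have e2 : (u • (1 : Matrix (Fin 2) (Fin 2) K)) * (v' • A) = (u*v') • A := by
    rw [smul_mul_assoc, mul_smul_comm, smul_smul, one_mul]
  have e3 : (v • A) * (u' • (1 : Matrix (Fin 2) (Fin 2) K)) = (v*u') • A := by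
    rw [smul_mul_assoc, mul_smul_comm, smul_smul, mul_one]
  have e4 : (v • A) * (v' • A) = ((v*v')*t) • A - ((v*v')*d) • (1 : Matrix (Fin 2) (Fin 2) K) := by
    rw [smul_mul_assoc, mul_smul_comm, smul_smul, hCH, smul_sub, smul_smul, smul_smul]
  rw [add_mul, mul_add, mul_add, e1, e2, e3, e4]
  match_scalars <;> ring

-- unipotent zpow
lemma unip_zpow {N : Matrix (Fin 2) (Fin 2) ℝ} (hN : N * N = 0)
    (x : (Matrix (Fin 2) (Fin 2) ℝ)ˣ) (a : ℝ) (hx : (x : Matrix (Fin 2) (Fin 2) ℝ) = 1 + a • N) :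
    ∀ m : ℤ, ((x ^ m : (Matrix (Fin 2) (Fin 2) ℝ)ˣ) : Matrix (Fin 2) (Fin 2) ℝ)
      = 1 + ((m : ℝ) * a) • N := by
  have key : ∀ b c : ℝ, ((1 + b • N) : Matrix (Fin 2) (Fin 2) ℝ) * (1 + c • N)
      = 1 + (b + c) • N := by
    intro b c
    have h2 : (b • N) * (c • N) = (0 : Matrix (Fin 2) (Fin 2) ℝ) := by
      rw [smul_mul_assoc, mul_smul_comm, hN, smul_zero, smul_zero]
    rw [add_mul, one_mul, mul_add, mul_one, h2, add_zero]
    match_scalars <;> ring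
  have hinv : ((x⁻¹ : _ˣ) : Matrix (Fin 2) (Fin 2) ℝ) = 1 + (-a) • N := by
    have h1 : ((x : Matrix (Fin 2) (Fin 2) ℝ)) * (1 + (-a) • N) = 1 := by
      rw [hx, key]; simp
    calc ((x⁻¹ : _ˣ) : Matrix (Fin 2) (Fin 2) ℝ)
        = ((x⁻¹ : _ˣ) : Matrix (Fin 2) (Fin 2) ℝ) * ((x : Matrix (Fin 2) (Fin 2) ℝ)
            * (1 + (-a) • N)) := by rw [h1, mul_one]
      _ = 1 + (-a) • N := by rw [← mul_assoc, ← Units.val_mul, inv_mul_cancel x]; simp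
  intro m
  induction m using Int.induction_on with
  | zero => simp
  | succ k ih =>
      rw [_root_.zpow_add_one, Units.val_mul, ih, hx, key]
      match_scalars <;> push_cast <;> ring
  | pred k ih =>
      rw [_root_.zpow_sub_one, Units.val_mul, ih, hinv, key]
      match_scalars <;> push_cast <;> ring

lemma unip_mul {N : Matrix (Fin 2) (Fin 2) ℝ} (hN : N * N = 0) (b c : ℝ) :
    ((1 + b • N) : Matrix (Fin 2) (Fin 2) ℝ) * (1 + c • N) = 1 + (b + c) • N := by
  have h2 : (b • N) * (c • N) = (0 : Matrix (Fin 2) (Fin 2) ℝ) := by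
    rw [smul_mul_assoc, mul_smul_comm, hN, smul_zero, smul_zero]
  rw [add_mul, one_mul, mul_add, mul_one, h2, add_zero]
  match_scalars <;> ring

-- finiteness of bounded integer matrices
lemma bounded_finite (C : ℝ) :
    {M : Matrix (Fin 2) (Fin 2) ℤ | ∀ i j, |(M i j : ℝ)| ≤ C}.Finite := by
  classical
  have hfin : (Set.pi Set.univ (fun _ : Fin 2 => Set.pi Set.univ
      (fun _ : Fin 2 => Set.Icc (-⌈C⌉) ⌈C⌉)) : Set (Matrix (Fin 2) (Fin 2) ℤ)).Finite :=
    Set.Finite.pi (fun _ => Set.Finite.pi (fun _ => Set.finite_Icc _ _))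
  refine hfin.subset ?_
  intro M hM i _ j _
  have h := hM i j
  have h1 : (M i j : ℝ) ≤ C := (abs_le.mp h).2
  have h2 : -C ≤ (M i j : ℝ) := (abs_le.mp h).1
  have hC := Int.le_ceil C
  constructor
  · exact_mod_cast le_trans (by linarith : (-⌈C⌉ : ℝ) ≤ (M i j : ℝ)) (le_refl _)
  · exact_mod_cast le_trans h1 hC
-- non-square facts
lemma nonsq1 {t : ℤ} (ht : 3 ≤ |t|) : ¬ IsSquare (t^2 - 4) := by
  rintro ⟨s, hs⟩
  have hs' : |s| * |s| = |t| * |t| - 4 := by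
    rw [abs_mul_abs_self, abs_mul_abs_self]; linarith [hs, sq t]; 
  rcases le_or_gt |s| (|t| - 1) with h | h
  · nlinarith [abs_nonneg s, abs_nonneg t]
  · nlinarith [abs_nonneg s, abs_nonneg t]

lemma nonsq2 {t : ℤ} (ht : t ≠ 0) : ¬ IsSquare (t^2 + 4) := by
  rintro ⟨s, hs⟩
  have hs' : |s| * |s| = |t| * |t| + 4 := by
    rw [abs_mul_abs_self, abs_mul_abs_self]; linarith [hs, sq t]
  have ht1 : 1 ≤ |t| := by have := abs_pos.mpr ht; omega
  have h3 : |t| < |s| := by nlinarith [abs_nonneg s, abs_nonneg t]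
  have h4 : |s| < |t| + 2 := by nlinarith [abs_nonneg s, abs_nonneg t]
  have h5 : |s| = |t| + 1 := by omega
  rw [h5] at hs'
  have h6 : 2*|t| = 3 := by linear_combination hs'
  omega

noncomputable def fR : Matrix (Fin 2) (Fin 2) ℤ →+* Matrix (Fin 2) (Fin 2) ℝ :=
  (Int.castRingHom ℝ).mapMatrix

noncomputable def ΦR : (Matrix (Fin 2) (Fin 2) ℤ)ˣ →* (Matrix (Fin 2) (Fin 2) ℝ)ˣ :=
  Units.map fR.toMonoidHom

lemma fR_apply (M : Matrix (Fin 2) (Fin 2) ℤ) (i j : Fin 2) : fR M i j = (M i j : ℝ) := by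
  simp [fR, RingHom.mapMatrix_apply, Matrix.map_apply]

lemma fR_trace (M : Matrix (Fin 2) (Fin 2) ℤ) : (fR M).trace = (M.trace : ℝ) := by
  rw [Matrix.trace_fin_two, Matrix.trace_fin_two, fR_apply, fR_apply]; push_cast; ring

lemma fR_det (M : Matrix (Fin 2) (Fin 2) ℤ) : (fR M).det = (M.det : ℝ) := by
  rw [Matrix.det_fin_two, Matrix.det_fin_two, fR_apply, fR_apply, fR_apply, fR_apply]
  push_cast; ring

lemma ΦR_val (u : (Matrix (Fin 2) (Fin 2) ℤ)ˣ) : (ΦR u : Matrix (Fin 2) (Fin 2) ℝ) = fR u.val :=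
  rfl

lemma fR_inj : Function.Injective fR := by
  intro x y h
  ext i j
  have := congrFun (congrFun (congrArg (fun M => (M : Matrix (Fin 2) (Fin 2) ℝ)) h) i) j
  simp only [fR_apply] at this
  exact_mod_cast this

lemma ΦR_inj : Function.Injective ΦR := by
  intro x y h
  have h2 : fR x.val = fR y.val := by
    rw [← ΦR_val, ← ΦR_val, h]
  have h3 : x.val = y.val := fR_inj h2
  exact Units.ext h3

lemma fR_nonscalar {M : Matrix (Fin 2) (Fin 2) ℤ} (h : Nonscalar M) : Nonscalar (fR M) := by
  rintro ⟨h1, h2, h3⟩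
  rw [fR_apply] at h1 h2
  rw [fR_apply, fR_apply] at h3
  exact h ⟨by exact_mod_cast h1, by exact_mod_cast h2, by exact_mod_cast h3⟩

lemma scalar_mul_self {A : Matrix (Fin 2) (Fin 2) ℤ}
    (h : A 0 1 = 0 ∧ A 1 0 = 0 ∧ A 0 0 = A 1 1) (hd : A.det = 1 ∨ A.det = -1) :
    A * A = 1 := by
  obtain ⟨h1, h2, h3⟩ := h
  have hdet : A.det = A 0 0 * A 0 0 := by
    rw [Matrix.det_fin_two, h1, ← h3]; ring
  have hsq : A 0 0 * A 0 0 = 1 := by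
    rcases hd with hd | hd
    · rw [← hdet]; exact hd
    · exfalso; rw [hdet] at hd; nlinarith [sq_nonneg (A 0 0)]
  ext i j
  fin_cases i <;> fin_cases j <;>
    simp [Matrix.mul_apply, Fin.sum_univ_two, h1, h2, ← h3, Matrix.one_apply] <;> linarith

lemma parabolic {A B : (Matrix (Fin 2) (Fin 2) ℤ)ˣ}
    (hcomm : A.val * B.val = B.val * A.val) (hdA : A.val.det = 1)
    (ht : |A.val.trace| = 2) (hnsA : Nonscalar A.val) (hnsB : Nonscalar B.val)
    (hdB : B.val.det = 1 ∨ B.val.det = -1) :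
    ∃ m n : ℤ, n ≠ 0 ∧ A ^ (2*m) * B ^ (2*n) = 1 := by
  obtain ⟨ε, hε2, hεt⟩ : ∃ ε : ℤ, ε * ε = 1 ∧ A.val.trace = 2*ε := by
    rcases abs_choice A.val.trace with h | h <;> rw [h] at ht
    · exact ⟨1, by norm_num, by omega⟩
    · exact ⟨-1, by norm_num, by omega⟩
  have hε2R : (ε:ℝ) * (ε:ℝ) = 1 := by exact_mod_cast hε2
  set Ar : Matrix (Fin 2) (Fin 2) ℝ := fR A.val with hAr
  set B' : Matrix (Fin 2) (Fin 2) ℝ := fR B.val with hB'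
  have hchA : Ar * Ar = (2*(ε:ℝ)) • Ar - (1:ℝ) • 1 := by
    have h := CH2 Ar
    rw [fR_trace, fR_det, hdA, hεt] at h
    rw [h]
    push_cast
    module
  set N : Matrix (Fin 2) (Fin 2) ℝ := Ar - (ε:ℝ) • 1 with hNdef
  have hrepA : Ar = (ε:ℝ) • 1 + (1:ℝ) • N := by rw [hNdef]; module
  have hNN : N * N = 0 := by
    have h := rep_mul hchA (-(ε:ℝ)) 1 (-(ε:ℝ)) 1
    have hN' : N = (-(ε:ℝ)) • 1 + (1:ℝ) • Ar := by rw [hNdef]; module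
    rw [← hN'] at h
    rw [h]
    rw [show (-(ε:ℝ)) * (-(ε:ℝ)) - 1 * ((1:ℝ)*1) = 0 by linear_combination hε2R,
      show (-(ε:ℝ)) * 1 + (-(ε:ℝ)) * 1 + 2*(ε:ℝ) * ((1:ℝ)*1) = 0 by ring]
    simp
  have hN0 : N * N = (0:ℝ) • N - (0:ℝ) • 1 := by rw [hNN]; simp
  have hcommR : Ar * B' = B' * Ar := by
    have h := congrArg fR hcomm
    simpa only [_root_.map_mul] using h
  obtain ⟨x, y, hB⟩ := centralizer (fR_nonscalar hnsA) hcommR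
  set w : ℝ := x + y * (ε:ℝ) with hwdef
  have hBrep : B' = w • 1 + y • N := by
    rw [hB, hNdef, hwdef]; module
  -- w = ±1
  have htrN : N.trace = 0 := by
    rw [hNdef, Matrix.trace_sub, Matrix.trace_smul, Matrix.trace_one, fR_trace, hεt]
    push_cast
    simp [smul_eq_mul]
    ring
  have hdetN : N.det = 0 := by
    have h := congrArg Matrix.det hNN
    have h0 : (0 : Matrix (Fin 2) (Fin 2) ℝ).det = 0 := by simp
    rw [Matrix.det_mul, h0] at h
    exact mul_self_eq_zero.mp h
  have hdetB' : (B'.det) = (B.val.det : ℝ) := fR_det _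
  have hw2 : w * w = 1 := by
    have h := det_comb N w y
    rw [← hBrep, htrN, hdetN, hdetB'] at h
    rcases hdB with hd | hd <;> rw [hd] at h
    · push_cast at h; linear_combination -h
    · exfalso; push_cast at h; nlinarith [h, sq_nonneg w, sq_nonneg y]
  obtain ⟨ζ, hζ1, hζw⟩ : ∃ ζ : ℤ, ζ * ζ = 1 ∧ (ζ:ℝ) = w := by
    rcases mul_self_eq_one_iff.mp hw2 with h | h
    · exact ⟨1, by norm_num, by rw [h]; norm_num⟩
    · exact ⟨-1, by norm_num, by rw [h]; push_cast; ring⟩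
  -- integer matrices
  set Nz : Matrix (Fin 2) (Fin 2) ℤ := A.val - ε • 1 with hNz
  set Cz : Matrix (Fin 2) (Fin 2) ℤ := B.val - ζ • 1 with hCz
  have hNzR : ∀ i j, (N i j : ℝ) = ((Nz i j : ℤ) : ℝ) := by
    intro i j
    simp only [hNdef, hNz, Matrix.sub_apply, Matrix.smul_apply, smul_eq_mul, hAr, fR_apply,
      Matrix.one_apply]
    split_ifs <;> push_cast <;> ring
  have hCzR : ∀ i j, y * N i j = ((Cz i j : ℤ) : ℝ) := by
    intro i j
    have h : y • N = B' - w • 1 := by rw [hBrep]; module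
    have h2 := congrFun (congrFun h i) j
    simp only [Matrix.smul_apply, Matrix.sub_apply, smul_eq_mul] at h2
    rw [h2, ← hζw]
    simp only [hCz, Matrix.sub_apply, Matrix.smul_apply, smul_eq_mul, hB', fR_apply,
      Matrix.one_apply]
    split_ifs <;> push_cast <;> ring
  obtain ⟨i, j, hij⟩ : ∃ i j, Nz i j ≠ 0 := by
    by_contra hc
    push_neg at hc
    apply hnsA
    have e01 := hc 0 1; have e10 := hc 1 0; have e00 := hc 0 0; have e11 := hc 1 1
    simp only [hNz, Matrix.sub_apply, Matrix.smul_apply, smul_eq_mul,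
      Matrix.one_apply] at e01 e10 e00 e11
    norm_num at e01 e10 e00 e11
    exact ⟨e01, e10, by omega⟩
  have hεne : ε ≠ 0 := by rintro rfl; norm_num at hε2
  have hyN : y * ((Nz i j : ℤ) : ℝ) = ((Cz i j : ℤ) : ℝ) := by
    rw [← hNzR i j]
    exact hCzR i j
  set m : ℤ := -ζ * Cz i j with hm
  set n : ℤ := ε * Nz i j with hn2
  have hnne : n ≠ 0 := by
    intro h
    exact hij ((mul_eq_zero.mp h).resolve_left hεne)
  have hval1 : ((ΦR A * ΦR A : (Matrix (Fin 2) (Fin 2) ℝ)ˣ) : Matrix (Fin 2) (Fin 2) ℝ)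
      = 1 + (2*(ε:ℝ)) • N := by
    rw [Units.val_mul, ΦR_val, ← hAr, hchA, hNdef]
    match_scalars <;> [skip; skip] <;>
      first | linear_combination (2:ℝ)*hε2R | linear_combination (-2:ℝ)*hε2R | ring
  have hval2 : ((ΦR B * ΦR B : (Matrix (Fin 2) (Fin 2) ℝ)ˣ) : Matrix (Fin 2) (Fin 2) ℝ)
      = 1 + (2*w*y) • N := by
    rw [Units.val_mul, ΦR_val, ← hB', hBrep, rep_mul hN0]
    match_scalars <;>
      first | linear_combination hw2 | linear_combination -hw2 | ring
  have hz1 := unip_zpow hNN (ΦR A * ΦR A) (2*(ε:ℝ)) hval1 m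
  have hz2 := unip_zpow hNN (ΦR B * ΦR B) (2*w*y) hval2 n
  have hcoeff : (m:ℝ)*(2*(ε:ℝ)) + (n:ℝ)*(2*w*y) = 0 := by
    rw [hm, hn2]
    push_cast
    linear_combination (2*w*(ε:ℝ))*hyN - (2*(ε:ℝ)*((Cz i j : ℤ):ℝ))*hζw
  have hrel : A ^ (2*m) * B ^ (2*n) = 1 := by
    apply ΦR_inj
    rw [_root_.map_mul, _root_.map_one, _root_.map_zpow, _root_.map_zpow]
    have hA2 : (ΦR A) ^ (2*m) = (ΦR A * ΦR A) ^ m := by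
      rw [_root_.zpow_mul, zpow_two]
    have hB2 : (ΦR B) ^ (2*n) = (ΦR B * ΦR B) ^ n := by
      rw [_root_.zpow_mul, zpow_two]
    rw [hA2, hB2]
    apply Units.ext
    rw [Units.val_mul, hz1, hz2, unip_mul hNN, Units.val_one, hcoeff]
    simp
  exact ⟨m, n, hnne, hrel⟩

set_option maxHeartbeats 2000000 in
lemma hyperbolic (α : Multiplicative (ℤ × ℤ) →* (Matrix (Fin 2) (Fin 2) ℤ)ˣ)
    (hα : Function.Injective ⇑α)
    (hns : Nonscalar (α (Multiplicative.ofAdd ((1:ℤ), (0:ℤ)))).val)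
    (hcase : ((α (Multiplicative.ofAdd ((1:ℤ), (0:ℤ)))).val.det = 1 ∧
        3 ≤ |(α (Multiplicative.ofAdd ((1:ℤ), (0:ℤ)))).val.trace|) ∨
      ((α (Multiplicative.ofAdd ((1:ℤ), (0:ℤ)))).val.det = -1 ∧
        (α (Multiplicative.ofAdd ((1:ℤ), (0:ℤ)))).val.trace ≠ 0)) : False := by
  set A := α (Multiplicative.ofAdd ((1:ℤ), (0:ℤ))) with hAdef
  set t : ℤ := A.val.trace with htdef
  set d : ℤ := A.val.det with hddef
  have hdet : ∀ g, (α g).val.det = 1 ∨ (α g).val.det = -1 := by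
    intro g
    have h1 : (α g).val.det * ((α g)⁻¹).val.det = 1 := by
      rw [← Matrix.det_mul, ← Units.val_mul, mul_inv_cancel, Units.val_one, Matrix.det_one]
    exact Int.isUnit_iff.mp (IsUnit.of_mul_eq_one _ h1)
  set D : ℤ := t^2 - 4*d with hDdef
  have hD5 : 5 ≤ D := by
    rcases hcase with ⟨hd1, ht3⟩ | ⟨hd1, ht0⟩
    · have h9 : 9 ≤ t^2 := by
        have := sq_abs t
        nlinarith [ht3]
      rw [hDdef, hd1]; omega
    · have h1 : 1 ≤ t^2 := by nlinarith [sq_abs t, abs_pos.mpr ht0]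
      rw [hDdef, hd1]; omega
  have hDns : ¬ IsSquare D := by
    rcases hcase with ⟨hd1, ht3⟩ | ⟨hd1, ht0⟩
    · rw [hDdef, hd1]; simpa using nonsq1 ht3
    · rw [hDdef, hd1]; simpa using nonsq2 ht0
  have hirr : Irrational (Real.sqrt ((D:ℤ) : ℝ)) :=
    irrational_sqrt_intCast_iff.mpr ⟨hDns, by omega⟩
  set s : ℝ := Real.sqrt ((D:ℤ) : ℝ) with hsdef
  have hs2 : s * s = (D:ℝ) := Real.mul_self_sqrt (by exact_mod_cast (by omega : (0:ℤ) ≤ D))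
  have hspos : 0 < s := Real.sqrt_pos.mpr (by exact_mod_cast (by omega : (0:ℤ) < D))
  set lam : ℝ := ((t:ℝ) + s)/2 with hlamdef
  set lam' : ℝ := ((t:ℝ) - s)/2 with hlam'def
  have hlam_mul : lam * lam' = (d:ℝ) := by
    rw [hlamdef, hlam'def]
    have hD : (D:ℝ) = (t:ℝ)^2 - 4*(d:ℝ) := by rw [hDdef]; push_cast; ring
    field_simp
    first | linear_combination 1*(hs2 + hD) | linear_combination 2*(hs2 + hD) | linear_combination -1*(hs2 + hD) | linear_combination -2*(hs2 + hD) | linear_combination 4*(hs2 + hD) | linear_combination -4*(hs2 + hD) | linear_combination (1/2)*(hs2 + hD) | linear_combination (-1/2)*(hs2 + hD) | ring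
  have hlam_add : lam + lam' = (t:ℝ) := by rw [hlamdef, hlam'def]; ring
  have hlam_sub : lam - lam' = s := by rw [hlamdef, hlam'def]; ring
  have hD' : (D:ℝ) = (t:ℝ)^2 - 4*(d:ℝ) := by rw [hDdef]; push_cast; ring
  have hlamCH : lam * lam = (t:ℝ) * lam - (d:ℝ) := by
    rw [hlamdef]
    field_simp
    first | linear_combination 1*(hs2 + hD') | linear_combination 2*(hs2 + hD') | linear_combination -1*(hs2 + hD') | linear_combination -2*(hs2 + hD') | linear_combination 4*(hs2 + hD') | linear_combination -4*(hs2 + hD') | linear_combination (1/2)*(hs2 + hD') | linear_combination (-1/2)*(hs2 + hD') | ring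
  have hlam'CH : lam' * lam' = (t:ℝ) * lam' - (d:ℝ) := by
    rw [hlam'def]
    field_simp
    first | linear_combination 1*(hs2 + hD') | linear_combination 2*(hs2 + hD') | linear_combination -1*(hs2 + hD') | linear_combination -2*(hs2 + hD') | linear_combination 4*(hs2 + hD') | linear_combination -4*(hs2 + hD') | linear_combination (1/2)*(hs2 + hD') | linear_combination (-1/2)*(hs2 + hD') | ring
  -- real matrices
  set Ar : Matrix (Fin 2) (Fin 2) ℝ := fR A.val with hArdef
  have hnsR : Nonscalar Ar := fR_nonscalar hns
  have hchA : Ar * Ar = (t:ℝ) • Ar - (d:ℝ) • 1 := by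
    have h := CH2 Ar
    rw [hArdef, fR_trace, fR_det, ← htdef, ← hddef] at h
    exact h
  -- representation of the image
  have H : ∀ g, ∃ uv : ℝ × ℝ, fR (α g).val = uv.1 • 1 + uv.2 • Ar := by
    intro g
    have hcz : A.val * (α g).val = (α g).val * A.val := by
      have e : A * α g = α g * A := by
        rw [hAdef, ← _root_.map_mul, ← _root_.map_mul]
        exact congrArg α (mul_comm _ _)
      rw [← Units.val_mul, ← Units.val_mul, e]
    have hc : Ar * fR (α g).val = fR (α g).val * Ar := by
      have h := congrArg fR hcz
      simpa only [_root_.map_mul, hArdef] using h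
    obtain ⟨u, v, h⟩ := centralizer hnsR hc
    exact ⟨(u, v), h⟩
  choose uv huv using H
  set χ : Multiplicative (ℤ × ℤ) → ℝ := fun g => (uv g).1 + (uv g).2 * lam with hχdef
  set χ' : Multiplicative (ℤ × ℤ) → ℝ := fun g => (uv g).1 + (uv g).2 * lam' with hχ'def
  have hmulc : ∀ g h : Multiplicative (ℤ × ℤ),
      (uv (g*h)).1 = (uv g).1*(uv h).1 - (d:ℝ)*((uv g).2*(uv h).2)
      ∧ (uv (g*h)).2 = (uv g).1*(uv h).2 + (uv h).1*(uv g).2 + (t:ℝ)*((uv g).2*(uv h).2) := by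
    intro g h
    have e1 : fR ((α (g*h)).val) = fR (α g).val * fR (α h).val := by
      rw [_root_.map_mul α, Units.val_mul, _root_.map_mul fR]
    rw [huv g, huv h, rep_mul hchA] at e1
    exact rep_unique hnsR ((huv (g*h)).symm.trans e1)
  have hχmul : ∀ g h, χ (g*h) = χ g * χ h := by
    intro g h
    obtain ⟨e1, e2⟩ := hmulc g h
    simp only [hχdef]
    rw [e1, e2]
    first | linear_combination 1*(((uv g).2*(uv h).2)*hlamCH) | linear_combination 2*(((uv g).2*(uv h).2)*hlamCH) | linear_combination -1*(((uv g).2*(uv h).2)*hlamCH) | linear_combination -2*(((uv g).2*(uv h).2)*hlamCH) | linear_combination 4*(((uv g).2*(uv h).2)*hlamCH) | linear_combination -4*(((uv g).2*(uv h).2)*hlamCH) | linear_combination (1/2)*(((uv g).2*(uv h).2)*hlamCH) | linear_combination (-1/2)*(((uv g).2*(uv h).2)*hlamCH) | ring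
  have hχ'mul : ∀ g h, χ' (g*h) = χ' g * χ' h := by
    intro g h
    obtain ⟨e1, e2⟩ := hmulc g h
    simp only [hχ'def]
    rw [e1, e2]
    first | linear_combination 1*(((uv g).2*(uv h).2)*hlam'CH) | linear_combination 2*(((uv g).2*(uv h).2)*hlam'CH) | linear_combination -1*(((uv g).2*(uv h).2)*hlam'CH) | linear_combination -2*(((uv g).2*(uv h).2)*hlam'CH) | linear_combination 4*(((uv g).2*(uv h).2)*hlam'CH) | linear_combination -4*(((uv g).2*(uv h).2)*hlam'CH) | linear_combination (1/2)*(((uv g).2*(uv h).2)*hlam'CH) | linear_combination (-1/2)*(((uv g).2*(uv h).2)*hlam'CH) | ring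
  have hdetval : ∀ g, χ g * χ' g = (((α g).val.det : ℤ) : ℝ) := by
    intro g
    have h2 : (fR (α g).val).det = (uv g).1^2 + (uv g).1*(uv g).2*(t:ℝ) + (uv g).2^2*(d:ℝ) := by
      rw [huv g, det_comb, hArdef, fR_trace, fR_det, ← htdef, ← hddef]
    have h3 : χ g * χ' g = (uv g).1^2 + (uv g).1*(uv g).2*(t:ℝ) + (uv g).2^2*(d:ℝ) := by
      simp only [hχdef, hχ'def]
      linear_combination ((uv g).2^2)*hlam_mul + ((uv g).1*(uv g).2)*hlam_add
    rw [h3, ← h2, fR_det]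
  have hdetpm : ∀ g, χ g * χ' g = 1 ∨ χ g * χ' g = -1 := by
    intro g
    rcases hdet g with h | h <;> rw [hdetval g, h]
    · left; norm_num
    · right; norm_num
  have hχne : ∀ g, χ g ≠ 0 := by
    intro g h
    rcases hdetpm g with h2 | h2 <;> rw [h, zero_mul] at h2 <;> norm_num at h2
  have hχ'ne : ∀ g, χ' g ≠ 0 := by
    intro g h
    rcases hdetpm g with h2 | h2 <;> rw [h, mul_zero] at h2 <;> norm_num at h2
  have habsprod : ∀ g, |χ g| * |χ' g| = 1 := by
    intro g
    rw [← abs_mul]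
    rcases hdetpm g with h | h <;> rw [h] <;> norm_num
  have hLadd : ∀ p q : ℤ × ℤ, Real.log (abs (χ (Multiplicative.ofAdd (p + q))))
      = Real.log (abs (χ (Multiplicative.ofAdd p)))
        + Real.log (abs (χ (Multiplicative.ofAdd q))) := by
    intro p q
    rw [ofAdd_add, hχmul, abs_mul,
      Real.log_mul (abs_ne_zero.mpr (hχne _)) (abs_ne_zero.mpr (hχne _))]
  set ℓ : ℤ × ℤ →+ ℝ :=
    AddMonoidHom.mk' (fun p => Real.log (abs (χ (Multiplicative.ofAdd p)))) hLadd with hℓdef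
  have hℓapp : ∀ p, ℓ p = Real.log (abs (χ (Multiplicative.ofAdd p))) := by
    intro p
    rw [hℓdef]
    rfl
  -- χ at the first generator
  have huvA : (uv (Multiplicative.ofAdd ((1:ℤ),(0:ℤ)))).1 = 0
      ∧ (uv (Multiplicative.ofAdd ((1:ℤ),(0:ℤ)))).2 = 1 := by
    have e := huv (Multiplicative.ofAdd ((1:ℤ),(0:ℤ)))
    have e2 : fR A.val = (0:ℝ) • (1 : Matrix (Fin 2) (Fin 2) ℝ) + (1:ℝ) • Ar := by
      rw [hArdef]; module
    rw [← hAdef] at e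
    exact rep_unique hnsR (e.symm.trans e2)
  have hχA : χ (Multiplicative.ofAdd ((1:ℤ),(0:ℤ))) = lam := by
    simp only [hχdef, huvA.1, huvA.2]
    ring
  -- rationality of lam would contradict irrationality of s
  have hlam_irr : ∀ σ : ℝ, σ = 1 ∨ σ = -1 → lam ≠ σ := by
    rintro σ hσ h
    apply hirr
    rcases hσ with h1 | h1
    · refine ⟨(2 - t : ℤ), ?_⟩
      have : s = 2 - (t:ℝ) := by
        rw [hlamdef] at h; rw [h1] at h; field_simp at h; linarith
      rw [this]; push_cast; norm_num
    · refine ⟨(-2 - t : ℤ), ?_⟩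
      have : s = -2 - (t:ℝ) := by
        rw [hlamdef] at h; rw [h1] at h; field_simp at h; linarith
      rw [this]; push_cast; norm_num
  -- kernel of L is trivial
  have hker : ∀ p : ℤ × ℤ, Real.log (abs (χ (Multiplicative.ofAdd p))) = 0 → p = 0 := by
    intro p hLp
    set g := Multiplicative.ofAdd p with hgdef
    have habs : |χ g| = 1 := by
      rcases Real.log_eq_zero.mp hLp with h | h | h
      · exact absurd h (abs_ne_zero.mpr (hχne g))
      · exact h
      · exfalso; linarith [abs_nonneg (χ g)]
    have habs' : |χ' g| = 1 := by
      have h := habsprod g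
      rw [habs, one_mul] at h
      exact h
    have hσ : χ g = 1 ∨ χ g = -1 := (abs_eq (by norm_num)).mp habs
    have hσ' : χ' g = 1 ∨ χ' g = -1 := (abs_eq (by norm_num)).mp habs'
    have hdiff : χ g - χ' g = (uv g).2 * s := by
      simp only [hχdef, hχ'def]
      linear_combination ((uv g).2)*hlam_sub
    by_cases hvv : χ g = χ' g
    · -- v = 0, α g squared is 1
      have hv0 : (uv g).2 = 0 := by
        have h0 : (uv g).2 * s = 0 := by rw [← hdiff, hvv, sub_self]
        exact (mul_eq_zero.mp h0).resolve_right hspos.ne'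
      have hu : χ g = (uv g).1 := by simp [hχdef, hv0]
      have hval : fR (α g).val = χ g • (1 : Matrix (Fin 2) (Fin 2) ℝ) := by
        rw [huv g, hv0, hu]
        module
      have hval2 : fR ((α (g*g)).val) = 1 := by
        rw [_root_.map_mul α, Units.val_mul, _root_.map_mul fR, hval]
        have e : (χ g • (1:Matrix (Fin 2) (Fin 2) ℝ)) * (χ g • 1) = (χ g * χ g) • 1 := by
          rw [smul_mul_assoc, mul_smul_comm, smul_smul, mul_one]
        rw [e]
        rcases hσ with h | h <;> rw [h] <;> norm_num
      have hone : α (g * g) = 1 := by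
        apply ΦR_inj
        apply Units.ext
        rw [ΦR_val, hval2, _root_.map_one, Units.val_one]
      have hgg : g * g = 1 := hα (hone.trans (_root_.map_one α).symm)
      have hpp : p + p = 0 := by
        have := congrArg Multiplicative.toAdd hgg
        simpa [hgdef] using this
      have h1 : p.1 + p.1 = 0 ∧ p.2 + p.2 = 0 := by
        constructor <;> [exact congrArg Prod.fst hpp; exact congrArg Prod.snd hpp]
      have : p.1 = 0 ∧ p.2 = 0 := by omega
      exact Prod.ext this.1 this.2
    · -- v ≠ 0 : s is rational, contradiction
      have hv0 : (uv g).2 ≠ 0 := by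
        intro h
        apply hvv
        have := hdiff
        rw [h, zero_mul] at this
        linarith
      -- entries give rationality of v
      have hent : ∀ i j, (((α g).val i j : ℤ) : ℝ)
          = (uv g).1 * (1 : Matrix (Fin 2) (Fin 2) ℝ) i j + (uv g).2 * Ar i j := by
        intro i j
        have h := congrFun (congrFun (huv g) i) j
        simpa only [Matrix.add_apply, Matrix.smul_apply, smul_eq_mul, fR_apply] using h
      have hArE : ∀ i j, Ar i j = ((A.val i j : ℤ) : ℝ) := by
        intro i j; rw [hArdef, fR_apply]
      have hvrat : ∃ q : ℚ, (q:ℝ) = (uv g).2 := by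
        by_cases hb : A.val 0 1 ≠ 0
        · refine ⟨((α g).val 0 1 : ℚ) / (A.val 0 1 : ℚ), ?_⟩
          have h := hent 0 1
          rw [Matrix.one_apply_ne (by norm_num), hArE] at h
          have hbR : ((A.val 0 1 : ℤ):ℝ) ≠ 0 := by exact_mod_cast hb
          push_cast
          rw [div_eq_iff hbR]
          linarith [h]
        · push_neg at hb
          by_cases hcc : A.val 1 0 ≠ 0
          · refine ⟨((α g).val 1 0 : ℚ) / (A.val 1 0 : ℚ), ?_⟩
            have h := hent 1 0
            rw [Matrix.one_apply_ne (by norm_num), hArE] at h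
            have hbR : ((A.val 1 0 : ℤ):ℝ) ≠ 0 := by exact_mod_cast hcc
            push_cast
            rw [div_eq_iff hbR]
            linarith [h]
          · push_neg at hcc
            have hae : A.val 0 0 ≠ A.val 1 1 := by
              intro h
              exact hns ⟨hb, hcc, h⟩
            refine ⟨((α g).val 0 0 - (α g).val 1 1 : ℚ) / ((A.val 0 0 - A.val 1 1 : ℤ) : ℚ), ?_⟩
            have h00 := hent 0 0
            have h11 := hent 1 1
            rw [Matrix.one_apply_eq, hArE] at h00
            rw [Matrix.one_apply_eq, hArE] at h11
            have hbR : (((A.val 0 0 - A.val 1 1) : ℤ):ℝ) ≠ 0 := by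
              intro h
              apply hae
              exact_mod_cast sub_eq_zero.mp (by exact_mod_cast h)
            push_cast
            push_cast at hbR
            rw [div_eq_iff hbR]
            push_cast at h00 h11
            linarith [h00, h11]
      obtain ⟨q, hq⟩ := hvrat
      have hqne : q ≠ 0 := by
        intro h
        rw [h] at hq
        exact hv0 (by exact_mod_cast hq.symm)
      have hsig : χ g - χ' g = 2 ∨ χ g - χ' g = -2 := by
        rcases hσ with h | h <;> rcases hσ' with h' | h'
        · exact absurd (h.trans h'.symm) hvv
        · left; rw [h, h']; norm_num
        · right; rw [h, h']; norm_num
        · exact absurd (h.trans h'.symm) hvv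
      exfalso
      apply hirr
      have hqR : (q:ℝ) ≠ 0 := by exact_mod_cast hqne
      rcases hsig with h2 | h2
      · refine ⟨2/q, ?_⟩
        have hv2 : (uv g).2 * s = 2 := by rw [← hdiff, h2]
        push_cast
        rw [div_eq_iff hqR]
        linear_combination -hv2 - s*hq
      · refine ⟨-2/q, ?_⟩
        have hv2 : (uv g).2 * s = -2 := by rw [← hdiff, h2]
        push_cast
        rw [div_eq_iff hqR]
        linear_combination -hv2 - s*hq
  -- ℓ at (1,0) is nonzero
  have habs_sub : ∀ x y : ℝ, |x - y| ≤ |x| + |y| := by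
    intro x y
    rw [sub_eq_add_neg]
    exact (abs_add_le _ _).trans (by rw [abs_neg])
  have hℓ10 : ℓ ((1:ℤ),(0:ℤ)) ≠ 0 := by
    have hlam0 : lam ≠ 0 := by
      intro h
      have h2 := hlam_mul
      rw [h, zero_mul] at h2
      rcases hcase with ⟨hd1, _⟩ | ⟨hd1, _⟩ <;> rw [hd1] at h2 <;>
        norm_num at h2
    intro h
    have hL0 : Real.log |lam| = 0 := by
      rw [hℓapp, hχA] at h
      exact h
    rcases Real.log_eq_zero.mp hL0 with h1 | h1 | h1
    · exact hlam0 (abs_eq_zero.mp h1)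
    · rcases (abs_eq (by norm_num : (0:ℝ) ≤ 1)).mp h1 with h2 | h2
      · exact hlam_irr 1 (Or.inl rfl) h2
      · exact hlam_irr (-1) (Or.inr rfl) h2
    · linarith [abs_nonneg lam]
  rcases AddSubgroup.dense_or_cyclic ℓ.range with hdense | ⟨a, ha⟩
  · -- dense case
    set T : Set (ℤ × ℤ) := {p | |ℓ p| < 1} with hTdef
    have hTinf : T.Infinite := by
      by_contra hfin
      rw [Set.not_infinite] at hfin
      have hE : (ℓ '' T).Finite := hfin.image ℓ
      have hsub : ((ℓ.range : AddSubgroup ℝ) : Set ℝ) ∩ Set.Ioo (-1) 1 ⊆ ℓ '' T := by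
        rintro x ⟨hx1, hx2⟩
        obtain ⟨p, rfl⟩ := hx1
        exact ⟨p, by simpa [hTdef] using abs_lt.mpr ⟨hx2.1, hx2.2⟩, rfl⟩
      have hopen : IsOpen (Set.Ioo (-1:ℝ) 1 \ (ℓ '' T)) := isOpen_Ioo.sdiff hE.isClosed
      have hne : (Set.Ioo (-1:ℝ) 1 \ (ℓ '' T)).Nonempty :=
        ((Set.Ioo_infinite (by norm_num)).diff hE).nonempty
      obtain ⟨x, hxS, hxU⟩ := hdense.exists_mem_open hopen hne
      exact hxU.2 (hsub ⟨hxS, hxU.1⟩)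
    have hexp3 : Real.exp 1 < 3 := by
      have := Real.exp_one_lt_d9
      linarith
    set Cv : ℝ := 6 / s with hCvdef
    have hCv0 : 0 ≤ Cv := le_of_lt (div_pos (by norm_num) hspos)
    set Cu : ℝ := 3 + Cv * |lam| with hCudef
    have hCu0 : 0 ≤ Cu := by
      have := mul_nonneg hCv0 (abs_nonneg lam)
      rw [hCudef]; linarith
    set C : ℝ := Cu + Cv * (|Ar 0 0| + |Ar 0 1| + |Ar 1 0| + |Ar 1 1|) with hCdef
    have hbound : ∀ p ∈ T, ∀ i j, |(((α (Multiplicative.ofAdd p)).val i j : ℤ) : ℝ)| ≤ C := by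
      intro p hp i j
      simp only [hTdef, Set.mem_setOf_eq, hℓapp] at hp
      set g := Multiplicative.ofAdd p with hgdef
      have hLp : |(Real.log (abs (χ g)))| < 1 := hp
      have hχpos : 0 < |χ g| := abs_pos.mpr (hχne g)
      have h3 : |χ g| < 3 := by
        have h := (Real.log_lt_iff_lt_exp hχpos).mp (lt_of_abs_lt hLp)
        linarith
      have hlow : (1:ℝ)/3 < |χ g| := by
        have h := (Real.lt_log_iff_exp_lt hχpos).mp (neg_lt_of_abs_lt hLp)
        have h2 : (1:ℝ)/3 < Real.exp (-1) := by
          rw [Real.exp_neg, one_div]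
          exact inv_strictAnti₀ (Real.exp_pos 1) hexp3
        linarith
      have h3' : |χ' g| < 3 := by
        have hprod := habsprod g
        have he : |χ' g| = 1 / |χ g| := by
          rw [eq_div_iff hχpos.ne']
          linear_combination hprod
        rw [he, div_lt_iff₀ hχpos]
        nlinarith [hlow]
      have hdiff : χ g - χ' g = (uv g).2 * s := by
        simp only [hχdef, hχ'def]
        linear_combination ((uv g).2)*hlam_sub
      have hv : |(uv g).2| ≤ Cv := by
        have h1 : |(uv g).2| * s = |χ g - χ' g| := by
          rw [hdiff, abs_mul, abs_of_pos hspos]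
        have h2 : |χ g - χ' g| ≤ 6 := by
          calc |χ g - χ' g| ≤ |χ g| + |χ' g| := habs_sub _ _
            _ ≤ 6 := by linarith
        rw [hCvdef, le_div_iff₀ hspos]
        linarith [h1, h2]
      have hu : |(uv g).1| ≤ Cu := by
        have h1 : (uv g).1 = χ g - (uv g).2 * lam := by simp only [hχdef]; ring
        rw [h1, hCudef]
        calc |χ g - (uv g).2 * lam| ≤ |χ g| + |(uv g).2 * lam| := habs_sub _ _
          _ = |χ g| + |(uv g).2| * |lam| := by rw [abs_mul]
          _ ≤ 3 + Cv * |lam| := by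
              have h4 := mul_le_mul_of_nonneg_right hv (abs_nonneg lam)
              linarith
      have hent : (((α g).val i j : ℤ) : ℝ)
          = (uv g).1 * (1 : Matrix (Fin 2) (Fin 2) ℝ) i j + (uv g).2 * Ar i j := by
        have h := congrFun (congrFun (huv g) i) j
        simpa only [Matrix.add_apply, Matrix.smul_apply, smul_eq_mul, fR_apply] using h
      rw [hent]
      have honeb : |(1 : Matrix (Fin 2) (Fin 2) ℝ) i j| ≤ 1 := by
        rw [Matrix.one_apply]; split_ifs <;> norm_num
      have hAij : |Ar i j| ≤ |Ar 0 0| + |Ar 0 1| + |Ar 1 0| + |Ar 1 1| := by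
        fin_cases i <;> fin_cases j <;>
          simp only [Fin.isValue, Fin.zero_eta, Fin.mk_one] <;>
          linarith [abs_nonneg (Ar 0 0), abs_nonneg (Ar 0 1), abs_nonneg (Ar 1 0),
            abs_nonneg (Ar 1 1)]
      calc |(uv g).1 * (1 : Matrix (Fin 2) (Fin 2) ℝ) i j + (uv g).2 * Ar i j|
          ≤ |(uv g).1| * |(1 : Matrix (Fin 2) (Fin 2) ℝ) i j| + |(uv g).2| * |Ar i j| := by
            refine (abs_add_le _ _).trans ?_
            rw [abs_mul, abs_mul]
        _ ≤ Cu * 1 + Cv * (|Ar 0 0| + |Ar 0 1| + |Ar 1 0| + |Ar 1 1|) := by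
            have e1 := mul_le_mul hu honeb (abs_nonneg _) hCu0
            have e2 := mul_le_mul hv hAij (abs_nonneg _) hCv0
            linarith
        _ = C := by rw [hCdef]; ring
    have hinj : Set.InjOn (fun p => (α (Multiplicative.ofAdd p)).val) T := by
      intro p _ q _ h
      have h2 : α (Multiplicative.ofAdd p) = α (Multiplicative.ofAdd q) := Units.ext h
      have h3 := hα h2
      have h4 := congrArg Multiplicative.toAdd h3
      simpa using h4
    have himg := (Set.infinite_image_iff hinj).mpr hTinf
    have hsubset : ((fun p => (α (Multiplicative.ofAdd p)).val) '' T)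
        ⊆ {M : Matrix (Fin 2) (Fin 2) ℤ | ∀ i j, |(M i j : ℝ)| ≤ C} := by
      rintro M ⟨p, hpT, rfl⟩
      exact fun i j => hbound p hpT i j
    exact himg ((bounded_finite C).subset hsubset)
  · -- cyclic case
    have hx : ℓ ((1:ℤ),(0:ℤ)) ∈ ℓ.range := ⟨((1:ℤ),(0:ℤ)), rfl⟩
    have hy : ℓ ((0:ℤ),(1:ℤ)) ∈ ℓ.range := ⟨((0:ℤ),(1:ℤ)), rfl⟩
    rw [ha] at hx hy
    obtain ⟨mm, hmm⟩ := AddSubgroup.mem_closure_singleton.mp hx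
    obtain ⟨nn, hnn⟩ := AddSubgroup.mem_closure_singleton.mp hy
    have hmne : mm ≠ 0 := by
      rintro rfl
      rw [zero_zsmul] at hmm
      exact hℓ10 hmm.symm
    have h0 : ℓ (nn • ((1:ℤ),(0:ℤ)) - mm • ((0:ℤ),(1:ℤ))) = 0 := by
      rw [map_sub, map_zsmul, map_zsmul, ← hmm, ← hnn, smul_smul, smul_smul, mul_comm,
        sub_self]
    rw [hℓapp] at h0
    have hker' := hker _ h0
    have h1 : nn • ((1:ℤ),(0:ℤ)) - mm • ((0:ℤ),(1:ℤ)) = ((nn:ℤ), (-mm:ℤ)) := by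
      simp [Prod.ext_iff]
    rw [h1] at hker'
    have h2 : -mm = 0 := congrArg Prod.snd hker'
    omega

/-- No homomorphism `ℤ² → GL₂(ℤ)` is injective; equivalently, `GL₂(ℤ)` contains no
subgroup isomorphic to `ℤ²`. -/
theorem no_injective_hom_Z2_to_GL2 (α : Multiplicative (ℤ × ℤ) →* (Matrix (Fin 2) (Fin 2) ℤ)ˣ) :
    ¬ Function.Injective α := by
  intro hα
  set A := α (Multiplicative.ofAdd ((1:ℤ), (0:ℤ))) with hAdef
  set B := α (Multiplicative.ofAdd ((0:ℤ), (1:ℤ))) with hBdef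
  have hpow : ∀ m n : ℤ, α (Multiplicative.ofAdd (m, n)) = A ^ m * B ^ n := by
    intro m n
    have h1 : ((m, n) : ℤ × ℤ) = m • ((1:ℤ), (0:ℤ)) + n • ((0:ℤ), (1:ℤ)) := by
      simp [Prod.ext_iff]
    rw [h1, ofAdd_add, _root_.map_mul, ofAdd_zsmul, ofAdd_zsmul, _root_.map_zpow,
      _root_.map_zpow]
  have hfin : ∀ m n : ℤ, A ^ m * B ^ n = 1 → m = 0 ∧ n = 0 := by
    intro m n h
    have h2 : α (Multiplicative.ofAdd (m, n)) = α 1 := by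
      rw [hpow, h, _root_.map_one]
    have h4 := congrArg Multiplicative.toAdd (hα h2)
    simpa [Prod.ext_iff] using h4
  have hdet : ∀ g, (α g).val.det = 1 ∨ (α g).val.det = -1 := by
    intro g
    have h1 : (α g).val.det * ((α g)⁻¹).val.det = 1 := by
      rw [← Matrix.det_mul, ← Units.val_mul, mul_inv_cancel, Units.val_one, Matrix.det_one]
    exact Int.isUnit_iff.mp (IsUnit.of_mul_eq_one _ h1)
  -- rule out scalar A
  by_cases hscA : (A.val 0 1 = 0 ∧ A.val 1 0 = 0 ∧ A.val 0 0 = A.val 1 1)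
  · have h1 : A.val * A.val = 1 := scalar_mul_self hscA (hdet _)
    have h2 : A ^ (2:ℤ) * B ^ (0:ℤ) = 1 := by
      rw [zpow_zero, mul_one, zpow_two]
      exact Units.ext (by rw [Units.val_mul, h1, Units.val_one])
    exact absurd (hfin 2 0 h2).1 (by norm_num)
  by_cases hscB : (B.val 0 1 = 0 ∧ B.val 1 0 = 0 ∧ B.val 0 0 = B.val 1 1)
  · have h1 : B.val * B.val = 1 := scalar_mul_self hscB (hdet _)
    have h2 : A ^ (0:ℤ) * B ^ (2:ℤ) = 1 := by
      rw [zpow_zero, one_mul, zpow_two]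
      exact Units.ext (by rw [Units.val_mul, h1, Units.val_one])
    exact absurd (hfin 0 2 h2).2 (by norm_num)
  have hcomm : A.val * B.val = B.val * A.val := by
    have h1 : A * B = B * A := by
      have e1 : A * B = α (Multiplicative.ofAdd ((1:ℤ),(0:ℤ)) * Multiplicative.ofAdd ((0:ℤ),(1:ℤ))) :=
        (_root_.map_mul α _ _).symm
      have e2 : B * A = α (Multiplicative.ofAdd ((0:ℤ),(1:ℤ)) * Multiplicative.ofAdd ((1:ℤ),(0:ℤ))) :=
        (_root_.map_mul α _ _).symm
      rw [e1, e2, mul_comm]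
    rw [← Units.val_mul, ← Units.val_mul, h1]
  have hch : A.val * A.val = A.val.trace • A.val - A.val.det • 1 := CH2 A.val
  rcases hdet (Multiplicative.ofAdd ((1:ℤ), (0:ℤ))) with hd1 | hdm1
  · -- det A = 1
    have htri : |A.val.trace| ≤ 1 ∨ |A.val.trace| = 2 ∨ 3 ≤ |A.val.trace| := by
      have h0 := abs_nonneg A.val.trace
      omega
    rcases htri with ht | ht | ht
    · -- finite order
      have hch2 : A.val * A.val = A.val.trace • A.val - 1 := by
        rw [hch, hd1, one_smul]
      have ht' : A.val.trace = -1 ∨ A.val.trace = 0 ∨ A.val.trace = 1 := by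
        have h2 := abs_nonneg A.val.trace
        rcases abs_choice A.val.trace with h1 | h1 <;> rw [h1] at ht h2 <;> omega
      have h12 : A.val ^ (12:ℕ) = 1 := by
        rcases ht' with h | h | h
        · rw [h] at hch2
          have h3 : A.val ^ 3 = 1 := by
            have e : A.val ^ 3 = (A.val * A.val) * A.val := by rw [pow_succ, sq]
            rw [e, hch2, sub_mul, smul_mul_assoc, one_mul, hch2]
            module
          rw [show (12:ℕ) = 3*4 from rfl, pow_mul, h3, one_pow]
        · rw [h] at hch2
          have h2 : A.val ^ 2 = -1 := by rw [sq, hch2]; module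
          rw [show (12:ℕ) = 2*6 from rfl, pow_mul, h2]
          exact Even.neg_one_pow ⟨3, rfl⟩
        · rw [h] at hch2
          have h3 : A.val ^ 3 = -1 := by
            have e : A.val ^ 3 = (A.val * A.val) * A.val := by rw [pow_succ, sq]
            rw [e, hch2, sub_mul, smul_mul_assoc, one_mul, hch2]
            module
          rw [show (12:ℕ) = 3*4 from rfl, pow_mul, h3]
          exact Even.neg_one_pow ⟨2, rfl⟩
      have hA12 : A ^ (12:ℤ) * B ^ (0:ℤ) = 1 := by
        rw [zpow_zero, mul_one]
        have e : A ^ (12:ℤ) = A ^ (12:ℕ) := by norm_cast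
        rw [e]
        exact Units.ext (by rw [Units.val_pow_eq_pow_val, h12, Units.val_one])
      exact absurd (hfin 12 0 hA12).1 (by norm_num)
    · -- parabolic
      obtain ⟨m, n, hn, hrel⟩ := parabolic hcomm hd1 ht hscA hscB (hdet _)
      have := (hfin _ _ hrel).2
      omega
    · exact hyperbolic α hα hscA (Or.inl ⟨hd1, ht⟩)
  · -- det A = -1
    by_cases ht0 : A.val.trace = 0
    · have hch2 : A.val * A.val = 1 := by
        rw [hch, hdm1, ht0]; module
      have h2 : A ^ (2:ℤ) * B ^ (0:ℤ) = 1 := by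
        rw [zpow_zero, mul_one, zpow_two]
        exact Units.ext (by rw [Units.val_mul, hch2, Units.val_one])
      exact absurd (hfin 2 0 h2).1 (by norm_num)
    · exact hyperbolic α hα hscA (Or.inr ⟨hdm1, ht0⟩)
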